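/- Let μ : ℂ → ℂ be analytic near 0 with μ(λ) = -λ/a + λ²β/a³ + O(λ³), where a > 0 and β > 0. Then there exist r, M, c > 0 such that for all real λ with 0 < λ ≤ r and all x ≥ 0: Re(λt + μ(λ)x) ≤ λ(t - x/a) + 2λ²βx/a³ for x/t bounded, and minimizing over λ ∈ [0,r] yields e^{λt + Re μ(λ)x} ≤ e^{-(x-at)²/(Mt)} when 0 ≤ (x-at)/t is sufficiently small, by choosing λ = λ_min proportional to (at - x)/t. -/

import Mathlib

open Asymptotics

/-- Scalar optimization in the low-frequency stationary-phase argument: for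
`μ(λ) = -λ/a + λ²β/a³ + O(λ³)` analytic near `0`, the exponent `Re(λt + μ(λ)x)` admits
the expansion bound, and optimizing over small real `λ` (proportional to `(at-x)/t`)
converts `e^{λt + Re μ(λ)x}` into a moving-Gaussian bound `e^{-(x-at)²/(Mt)}`. -/
theorem stmt11 (a β : ℝ) (ha : 0 < a) (hβ : 0 < β) (μ : ℂ → ℂ)
    (hμa : AnalyticAt ℂ μ 0)
    (hμ : (fun l : ℂ => μ l - (-l / (a : ℂ) + l ^ 2 * (β : ℂ) / (a : ℂ) ^ 3))
      =O[nhds 0] fun l : ℂ => ‖l‖ ^ 3) :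
    ∃ r > 0, ∃ M > 0, ∃ c > 0,
      (∀ l : ℝ, 0 < l → l ≤ r → ∀ x t : ℝ, 0 ≤ x → 0 < t → x ≤ c * t →
        ((l : ℂ) * (t : ℂ) + μ (l : ℂ) * (x : ℂ)).re
          ≤ l * (t - x / a) + 2 * l ^ 2 * β * x / a ^ 3) ∧
      (∀ x t : ℝ, 0 < t → 0 ≤ (x - a * t) / t → (x - a * t) / t ≤ c →
        ∃ l : ℝ, 0 ≤ l ∧ l ≤ r ∧
          Real.exp (l * t + (μ (l : ℂ)).re * x)
            ≤ Real.exp (-(x - a * t) ^ 2 / (M * t))) := by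
  obtain ⟨C, hC, hCb⟩ := hμ.exists_pos
  rw [isBigOWith_iff] at hCb
  obtain ⟨δ, hδ, hball⟩ := Metric.eventually_nhds_iff.mp hCb
  have hμ0 : μ 0 = 0 := by
    have h0 := hball (show dist (0:ℂ) 0 < δ by simpa using hδ)
    simp at h0
    simpa using h0
  have ha3 : (0:ℝ) < a^3 := by positivity
  set r : ℝ := min (δ/2) (β / (C * a^3)) with hrdef
  have hr0 : 0 < r := lt_min (by linarith) (div_pos hβ (by positivity))
  set c : ℝ := min 1 (4*β*r/a) with hcdef
  have hc0 : 0 < c := lt_min one_pos (by positivity)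
  set M : ℝ := 8*β*(a+c)/a with hMdef
  have hM0 : 0 < M := by positivity
  set κ : ℝ := a^2/(4*β*(a+c)) with hκdef
  have hκ0 : 0 < κ := by positivity
  have hrenorm : ∀ l : ℝ, ‖(l:ℂ)‖ = |l| := fun l => by
    rw [Complex.norm_real, Real.norm_eq_abs]
  have key : ∀ l : ℝ, 0 < l → l ≤ r → ∀ x : ℝ, 0 ≤ x → ∀ t : ℝ,
      l * t + (μ (l:ℂ)).re * x ≤ l * (t - x / a) + 2 * l ^ 2 * β * x / a ^ 3 := by
    intro l hl hlr x hx t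
    have hlδ : dist (l:ℂ) 0 < δ := by
      rw [dist_zero_right, hrenorm, abs_of_pos hl]
      have : l ≤ δ/2 := hlr.trans (min_le_left _ _)
      linarith
    have hE : ‖μ (l:ℂ) - (-(l:ℂ)/(a:ℂ) + (l:ℂ)^2*(β:ℂ)/(a:ℂ)^3)‖ ≤ C * l^3 := by
      have h := hball hlδ
      rwa [hrenorm, abs_of_pos hl, Real.norm_of_nonneg (by positivity : (0:ℝ) ≤ l^3)] at h
    have h1 : ((-(l:ℂ)/(a:ℂ) + (l:ℂ)^2*(β:ℂ)/(a:ℂ)^3)).re = -l/a + l^2*β/a^3 := by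
      have h' : (-(l:ℂ)/(a:ℂ) + (l:ℂ)^2*(β:ℂ)/(a:ℂ)^3) = ((-l/a + l^2*β/a^3 : ℝ) : ℂ) := by
        push_cast; ring
      rw [h', Complex.ofReal_re]
    have hre : (μ (l:ℂ)).re ≤ C*l^3 + (-l/a + l^2*β/a^3) := by
      have h2 : (μ (l:ℂ)).re
          = (μ (l:ℂ) - (-(l:ℂ)/(a:ℂ) + (l:ℂ)^2*(β:ℂ)/(a:ℂ)^3)).re + (-l/a + l^2*β/a^3) := by
        rw [Complex.sub_re, h1]; ring
      have h3 : (μ (l:ℂ) - (-(l:ℂ)/(a:ℂ) + (l:ℂ)^2*(β:ℂ)/(a:ℂ)^3)).re ≤ C*l^3 :=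
        le_trans (Complex.re_le_norm _) (by exact hE)
      linarith
    have hlβ : l * (C * a^3) ≤ β := by
      have h := hlr.trans (min_le_right (δ/2) (β / (C * a^3)))
      rwa [le_div_iff₀ (by positivity)] at h
    have h4 : C*l^3 ≤ l^2*β/a^3 := by
      rw [le_div_iff₀ ha3]
      nlinarith [mul_le_mul_of_nonneg_left hlβ (sq_nonneg l)]
    have h5 : (μ (l:ℂ)).re ≤ l^2*β/a^3 + (-l/a + l^2*β/a^3) := by linarith
    calc l * t + (μ (l:ℂ)).re * x
        ≤ l * t + (l^2*β/a^3 + (-l/a + l^2*β/a^3)) * x :=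
          add_le_add_right (mul_le_mul_of_nonneg_right h5 hx) _
      _ = l * (t - x / a) + 2 * l ^ 2 * β * x / a ^ 3 := by ring
  have hreq : ∀ (l x t : ℝ), ((l:ℂ) * (t:ℂ) + μ (l:ℂ) * (x:ℂ)).re
      = l * t + (μ (l:ℂ)).re * x := by
    intro l x t
    simp [Complex.add_re, Complex.mul_re]
  refine ⟨r, hr0, M, hM0, c, hc0, ?_, ?_⟩
  · intro l hl hlr x t hx ht hxc
    rw [hreq]
    exact key l hl hlr x hx t
  · intro x t ht hs hsc
    set s : ℝ := (x - a*t)/t with hsdef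
    have hst : s * t = x - a*t := div_mul_cancel₀ _ (ne_of_gt ht)
    rcases hs.eq_or_lt with h0 | hspos
    · refine ⟨0, le_refl 0, le_of_lt hr0, ?_⟩
      have hx0 : x - a*t = 0 := by rw [← hst, ← h0]; ring
      have hm : μ ((0:ℝ):ℂ) = 0 := by rw [Complex.ofReal_zero, hμ0]
      rw [hm, hx0]
      simp
    · have hxx : x = a*t + s*t := by linarith
      have hx0 : 0 ≤ x := by nlinarith [mul_pos ha ht, mul_pos hspos ht]
      have hκs : 0 < κ*s := mul_pos hκ0 hspos
      have hκeq : κ * (4*β*(a+c)) = a^2 := by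
        rw [hκdef]; field_simp
      have hcac : c * a ≤ 4*β*r := by
        have h := min_le_right 1 (4*β*r/a)
        rw [hcdef]
        calc (min 1 (4*β*r/a)) * a ≤ (4*β*r/a) * a := by
              exact mul_le_mul_of_nonneg_right h ha.le
          _ = 4*β*r := by field_simp
      have hκsr : κ*s ≤ r := by
        have h3 : κ*s*(4*β*(a+c)) ≤ r*(4*β*(a+c)) := by
          have e1 : κ*s*(4*β*(a+c)) = a^2*s := by
            rw [show κ*s*(4*β*(a+c)) = κ*(4*β*(a+c))*s by ring, hκeq]
          rw [e1]
          nlinarith [mul_le_mul_of_nonneg_left hsc (sq_nonneg a),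
            mul_le_mul_of_nonneg_left hcac ha.le,
            mul_pos (mul_pos hβ hr0) hc0]
        exact le_of_mul_le_mul_right h3 (by positivity)
      refine ⟨κ*s, hκs.le, hκsr, ?_⟩
      rw [Real.exp_le_exp]
      have hkey := key (κ*s) hκs hκsr x hx0 t
      have hid : -κ/a + 2*κ^2*β*(a+s)/a^3 = -(1/M) - a*(c-s)/(8*β*(a+c)^2) := by
        rw [hκdef, hMdef]
        field_simp
        ring
      have hcoef : -κ/a + 2*κ^2*β*(a+s)/a^3 ≤ -(1/M) := by
        have hcs : 0 ≤ a*(c-s)/(8*β*(a+c)^2) :=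
          div_nonneg (mul_nonneg ha.le (by linarith)) (by positivity)
        linarith [hid]
      have hL : κ*s*(t - x/a) + 2*(κ*s)^2*β*x/a^3 = (-κ/a + 2*κ^2*β*(a+s)/a^3) * (s^2*t) := by
        rw [hxx]; field_simp; ring
      have hR : -(x - a*t)^2/(M*t) = -(1/M) * (s^2*t) := by
        rw [← hst]; field_simp
      calc κ*s*t + (μ ((κ*s:ℝ):ℂ)).re * x
          ≤ κ*s*(t - x/a) + 2*(κ*s)^2*β*x/a^3 := hkey
        _ = (-κ/a + 2*κ^2*β*(a+s)/a^3) * (s^2*t) := hL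
        _ ≤ -(1/M) * (s^2*t) := mul_le_mul_of_nonneg_right hcoef (by positivity)
        _ = -(x - a*t)^2/(M*t) := hR.symm
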